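/- b₁ of the Hilbert scheme: for n ≥ 1 the coefficient of t¹q^n in Göttsche's product equals b1, i.e. b₁(X^[n]) = b₁(X) for all n ≥ 1. -/

import Mathlib

open PowerSeries Polynomial Finset

/-- The variable `t` viewed as a constant of the power-series ring `(ℤ[t])[[q]]`. -/
noncomputable def Tvar : PowerSeries (Polynomial ℤ) := PowerSeries.C (R := Polynomial ℤ) Polynomial.X

/-- The `m`-th factor of Göttsche's product. -/
noncomputable def gottscheFactor (b1 b2 m : ℕ) : PowerSeries (Polynomial ℤ) :=
  ((1 + Tvar ^ (2*m-1) * PowerSeries.X ^ m) * (1 + Tvar ^ (2*m+1) * PowerSeries.X ^ m)) ^ b1 *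
  PowerSeries.invOfUnit
    ((1 - Tvar ^ (2*m-2) * PowerSeries.X ^ m) * (1 - Tvar ^ (2*m+2) * PowerSeries.X ^ m) *
      (1 - Tvar ^ (2*m) * PowerSeries.X ^ m) ^ b2) 1

/-- The coefficient of `q^n` in Göttsche's product (only factors with `m ≤ n` contribute). -/
noncomputable def gottscheCoeff (b1 b2 n : ℕ) : Polynomial ℤ :=
  PowerSeries.coeff (R := Polynomial ℤ) n (∏ m ∈ Finset.Icc 1 n, gottscheFactor b1 b2 m)

noncomputable def phi : Polynomial ℤ →+* DualNumber ℤ :=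
  (Polynomial.aeval DualNumber.eps).toRingHom

lemma eps_pow_eq_zero {k : ℕ} (hk : 2 ≤ k) : (DualNumber.eps : DualNumber ℤ) ^ k = 0 := by
  obtain ⟨j, rfl⟩ := Nat.exists_eq_add_of_le hk
  rw [pow_add, pow_two, DualNumber.eps_mul_eps, zero_mul]

lemma phi_snd (P : Polynomial ℤ) : (phi P).snd = P.coeff 1 := by
  induction P using Polynomial.induction_on' with
  | add p q hp hq => simp [map_add, TrivSqZeroExt.snd_add, hp, hq]
  | monomial k a =>
    simp only [phi, AlgHom.toRingHom_eq_coe, RingHom.coe_coe, aeval_monomial]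
    rcases k with _ | _ | k
    · rw [Polynomial.coeff_monomial]
      simp [TrivSqZeroExt.snd_mul]
    · simp [TrivSqZeroExt.snd_mul, Polynomial.coeff_monomial]
    · rw [eps_pow_eq_zero (by omega), mul_zero]
      simp [Polynomial.coeff_monomial]

lemma phi_X : phi Polynomial.X = DualNumber.eps := by simp [phi]

noncomputable def Phi : PowerSeries (Polynomial ℤ) →+* PowerSeries (DualNumber ℤ) :=
  PowerSeries.map phi

lemma Phi_Tvar_pow (a : ℕ) : Phi (Tvar ^ a) = PowerSeries.C (DualNumber.eps ^ a) := by
  rw [Phi, Tvar, ← map_pow, PowerSeries.map_C, map_pow, phi_X]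

lemma Phi_Tvar_pow_of_two_le {a : ℕ} (ha : 2 ≤ a) : Phi (Tvar ^ a) = 0 := by
  rw [Phi_Tvar_pow, eps_pow_eq_zero ha, map_zero]

-- denominator is a unit with constant coefficient 1
lemma constCoeff_denom (b2 m : ℕ) (hm : 1 ≤ m) :
    PowerSeries.constantCoeff (R := Polynomial ℤ)
      ((1 - Tvar ^ (2*m-2) * PowerSeries.X ^ m) * (1 - Tvar ^ (2*m+2) * PowerSeries.X ^ m) *
        (1 - Tvar ^ (2*m) * PowerSeries.X ^ m) ^ b2) = 1 := by
  have hX : PowerSeries.constantCoeff (R := Polynomial ℤ) (PowerSeries.X ^ m) = 0 := by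
    rw [map_pow, constantCoeff_X, zero_pow (by omega)]
  simp [map_mul, map_sub, map_pow, hX]

lemma inv_unique' {R : Type*} [CommRing R] {a b c : R} (hb : a * b = 1) (hc : a * c = 1) :
    b = c := by
  calc b = b * (a * c) := by rw [hc, mul_one]
  _ = (a * b) * c := by ring
  _ = c := by rw [hb, one_mul]

lemma Phi_invOfUnit {f : PowerSeries (Polynomial ℤ)}
    (hf : PowerSeries.constantCoeff (R := Polynomial ℤ) f = 1) {g : PowerSeries (DualNumber ℤ)}
    (hg : Phi f * g = 1) : Phi (PowerSeries.invOfUnit f 1) = g := by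
  have h1 : f * PowerSeries.invOfUnit f 1 = 1 :=
    PowerSeries.mul_invOfUnit f 1 (by simpa using hf)
  have h2 : Phi f * Phi (PowerSeries.invOfUnit f 1) = 1 := by
    rw [← map_mul, h1, map_one]
  exact inv_unique' h2 hg

lemma Phi_factor_of_two_le {b1 b2 m : ℕ} (hm : 2 ≤ m) :
    Phi (gottscheFactor b1 b2 m) = 1 := by
  have h1 : Phi (Tvar ^ (2*m-1) * PowerSeries.X ^ m) = 0 := by
    rw [map_mul, Phi_Tvar_pow_of_two_le (by omega), zero_mul]
  have h2 : Phi (Tvar ^ (2*m+1) * PowerSeries.X ^ m) = 0 := by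
    rw [map_mul, Phi_Tvar_pow_of_two_le (by omega), zero_mul]
  have h3 : Phi ((1 - Tvar ^ (2*m-2) * PowerSeries.X ^ m) * (1 - Tvar ^ (2*m+2) * PowerSeries.X ^ m) *
      (1 - Tvar ^ (2*m) * PowerSeries.X ^ m) ^ b2) = 1 := by
    rw [map_mul, map_mul, map_pow, map_sub, map_sub, map_sub, map_one,
      map_mul, map_mul, map_mul,
      Phi_Tvar_pow_of_two_le (a := 2*m-2) (by omega),
      Phi_Tvar_pow_of_two_le (a := 2*m+2) (by omega),
      Phi_Tvar_pow_of_two_le (a := 2*m) (by omega)]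
    simp
  have hinv : Phi (PowerSeries.invOfUnit
      ((1 - Tvar ^ (2*m-2) * PowerSeries.X ^ m) * (1 - Tvar ^ (2*m+2) * PowerSeries.X ^ m) *
        (1 - Tvar ^ (2*m) * PowerSeries.X ^ m) ^ b2) 1) = 1 :=
    Phi_invOfUnit (constCoeff_denom b2 m (by omega)) (by rw [h3, one_mul])
  rw [gottscheFactor, map_mul, map_pow, map_mul, map_add, map_add, map_one, h1, h2, hinv]
  simp

lemma Phi_factor_one (b1 b2 : ℕ) :
    Phi (gottscheFactor b1 b2 1) =
      (1 + PowerSeries.C DualNumber.eps * PowerSeries.X) ^ b1 * invUnitsSub 1 := by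
  have h2 : Phi (Tvar ^ (2*1+1) * PowerSeries.X ^ 1) = 0 := by
    rw [map_mul, Phi_Tvar_pow_of_two_le (by omega), zero_mul]
  have h1 : Phi (Tvar ^ (2*1-1) * PowerSeries.X ^ 1) =
      PowerSeries.C DualNumber.eps * PowerSeries.X := by
    rw [map_mul, Phi_Tvar_pow]
    simp [Phi]
  have h3 : Phi ((1 - Tvar ^ (2*1-2) * PowerSeries.X ^ 1) * (1 - Tvar ^ (2*1+2) * PowerSeries.X ^ 1) *
      (1 - Tvar ^ (2*1) * PowerSeries.X ^ 1) ^ b2) = 1 - PowerSeries.X := by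
    rw [map_mul, map_mul, map_pow, map_sub, map_sub, map_sub, map_one,
      map_mul, map_mul, map_mul,
      Phi_Tvar_pow_of_two_le (a := 2*1+2) (by omega),
      Phi_Tvar_pow_of_two_le (a := 2*1) (by omega), Phi_Tvar_pow]
    simp [Phi]
  have hmul : (1 - PowerSeries.X : PowerSeries (DualNumber ℤ)) * invUnitsSub 1 = 1 := by
    have h := PowerSeries.invUnitsSub_mul_sub (R := DualNumber ℤ) 1
    rw [Units.val_one, map_one] at h
    rw [mul_comm]; exact h
  have hinv : Phi (PowerSeries.invOfUnit
      ((1 - Tvar ^ (2*1-2) * PowerSeries.X ^ 1) * (1 - Tvar ^ (2*1+2) * PowerSeries.X ^ 1) *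
        (1 - Tvar ^ (2*1) * PowerSeries.X ^ 1) ^ b2) 1) = invUnitsSub 1 :=
    Phi_invOfUnit (constCoeff_denom b2 1 le_rfl) (by rw [h3]; exact hmul)
  rw [gottscheFactor, map_mul, map_pow, map_mul, map_add, map_add, map_one, h1, h2, hinv]
  simp

lemma one_add_pow {R : Type*} [CommRing R] {a : R} (h : a * a = 0) (k : ℕ) :
    (1 + a) ^ k = 1 + k • a := by
  induction k with
  | zero => simp
  | succ k ih =>
    rw [pow_succ, ih, add_mul, one_mul, mul_add, mul_one, smul_mul_assoc, h, smul_zero,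
      add_zero, succ_nsmul]
    abel


/-- `b₁` of the Hilbert scheme: for `n ≥ 1` the coefficient of `t¹ q^n` in Göttsche's
product equals `b1`, i.e. `b₁(X^[n]) = b₁(X)`. -/
theorem gottsche_b1 (b1 b2 n : ℕ) (hn : 1 ≤ n) :
    (gottscheCoeff b1 b2 n).coeff 1 = (b1 : ℤ) := by
  rw [← phi_snd]
  have hprod : Phi (∏ m ∈ Finset.Icc 1 n, gottscheFactor b1 b2 m) =
      (1 + PowerSeries.C DualNumber.eps * PowerSeries.X) ^ b1 * invUnitsSub 1 := by
    rw [map_prod]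
    rw [Finset.prod_eq_single_of_mem 1 (by simp [hn])]
    · exact Phi_factor_one b1 b2
    · intro m hm hne
      exact Phi_factor_of_two_le (by simp at hm; omega)
  have hc : phi (gottscheCoeff b1 b2 n) =
      PowerSeries.coeff n ((1 + PowerSeries.C DualNumber.eps * PowerSeries.X) ^ b1 *
        invUnitsSub 1) := by
    rw [gottscheCoeff, ← hprod, Phi, PowerSeries.coeff_map]
  rw [hc]
  have hsq : (PowerSeries.C (R := DualNumber ℤ) DualNumber.eps * PowerSeries.X) *
      (PowerSeries.C (R := DualNumber ℤ) DualNumber.eps * PowerSeries.X) = 0 := by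
    rw [mul_mul_mul_comm, ← map_mul, DualNumber.eps_mul_eps, map_zero, zero_mul]
  rw [one_add_pow hsq]
  obtain ⟨k, rfl⟩ : ∃ k, n = k + 1 := ⟨n - 1, by omega⟩
  rw [add_mul, one_mul, map_add]
  rw [smul_mul_assoc, map_nsmul, mul_assoc]
  rw [PowerSeries.coeff_C_mul]
  rw [PowerSeries.coeff_succ_X_mul]
  simp [PowerSeries.coeff_invUnitsSub, TrivSqZeroExt.snd_add, TrivSqZeroExt.snd_smul]
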